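/- If g: ℝⁿ → ℝ is convex, differentiable, and its gradient is L-Lipschitz, then its convex conjugate g* is (1/L)-strongly convex on its domain. -/

import Mathlib

open RealInnerProductSpace

lemma descent_aux {n : ℕ} (g : EuclideanSpace ℝ (Fin n) → ℝ)
    (G : EuclideanSpace ℝ (Fin n) → EuclideanSpace ℝ (Fin n)) (L : ℝ) (hL : 0 < L)
    (hgrad : ∀ x, HasGradientAt g (G x) x)
    (hlip : ∀ x y, ‖G x - G y‖ ≤ L * ‖x - y‖) (x u : EuclideanSpace ℝ (Fin n)) :
    g (x + u) ≤ g x + ⟪G x, u⟫ + L / 2 * ‖u‖ ^ 2 := by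
  set h : ℝ → ℝ := fun t => g (x + t • u) - t * ⟪G x, u⟫ - t ^ 2 * (L / 2) * ‖u‖ ^ 2 with hh
  have hd : ∀ t : ℝ, HasDerivAt h
      (⟪G (x + t • u), u⟫ - ⟪G x, u⟫ - t * L * ‖u‖ ^ 2) t := by
    intro t
    have h1 : HasDerivAt (fun t : ℝ => x + t • u) u t := by
      simpa using ((hasDerivAt_id t).smul_const u).const_add x
    have h2 : HasDerivAt (fun t : ℝ => g (x + t • u)) ⟪G (x + t • u), u⟫ t := by
      have := (hgrad (x + t • u)).hasFDerivAt.comp_hasDerivAt t h1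
      simp at this; exact this
    have h3 : HasDerivAt (fun t : ℝ => t * ⟪G x, u⟫) ⟪G x, u⟫ t := by
      simpa using (hasDerivAt_id t).mul_const (⟪G x, u⟫)
    have h4 : HasDerivAt (fun t : ℝ => t ^ 2 * (L / 2) * ‖u‖ ^ 2)
        (t * L * ‖u‖ ^ 2) t := by
      have := (((hasDerivAt_pow 2 t)).mul_const (L / 2)).mul_const (‖u‖ ^ 2)
      convert this using 1
      · rfl
      · rfl
      · rw [show (2:ℕ) - 1 = 1 from rfl]; push_cast; ring
    exact (h2.sub h3).sub h4
  have hanti : AntitoneOn h (Set.Icc (0 : ℝ) 1) := by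
    apply antitoneOn_of_deriv_nonpos (convex_Icc 0 1)
    · exact fun t _ => ((hd t).continuousAt).continuousWithinAt
    · intro t ht
      exact (hd t).differentiableAt.differentiableWithinAt
    · intro t ht
      rw [interior_Icc] at ht
      rw [(hd t).deriv]
      have hb : ⟪G (x + t • u) - G x, u⟫ ≤ ‖G (x + t • u) - G x‖ * ‖u‖ :=
        real_inner_le_norm _ _
      have hc : ‖G (x + t • u) - G x‖ ≤ L * (t * ‖u‖) := by
        have := hlip (x + t • u) x
        simpa [norm_smul, abs_of_pos ht.1] using this
      have : ⟪G (x + t • u), u⟫ - ⟪G x, u⟫ ≤ t * L * ‖u‖ ^ 2 := by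
        rw [← inner_sub_left]
        calc ⟪G (x + t • u) - G x, u⟫ ≤ ‖G (x + t • u) - G x‖ * ‖u‖ := hb
        _ ≤ L * (t * ‖u‖) * ‖u‖ := by
              apply mul_le_mul_of_nonneg_right hc (norm_nonneg _)
        _ = t * L * ‖u‖ ^ 2 := by ring
      linarith
  have := hanti (Set.left_mem_Icc.2 zero_le_one) (Set.right_mem_Icc.2 zero_le_one) zero_le_one
  have h0 : h 0 = g x := by
    simp only [hh, zero_smul, add_zero, zero_mul, sub_zero, ne_eq, OfNat.ofNat_ne_zero,
      not_false_eq_true, zero_pow]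
  have h1 : h 1 = g (x + u) - ⟪G x, u⟫ - L / 2 * ‖u‖ ^ 2 := by
    simp only [hh, one_smul, one_mul, one_pow]
  rw [h0, h1] at this
  linarith

theorem stmt_7' {n : ℕ} (g : EuclideanSpace ℝ (Fin n) → ℝ)
    (G : EuclideanSpace ℝ (Fin n) → EuclideanSpace ℝ (Fin n)) (L : ℝ) (hL : 0 < L)
    (hconv : ConvexOn ℝ Set.univ g)
    (hgrad : ∀ x, HasGradientAt g (G x) x)
    (hlip : ∀ x y, ‖G x - G y‖ ≤ L * ‖x - y‖) :
    ∀ p q : EuclideanSpace ℝ (Fin n),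
      (⨆ x : EuclideanSpace ℝ (Fin n), ((⟪p, x⟫ - g x : ℝ) : EReal)) ≠ ⊤ →
      (⨆ x : EuclideanSpace ℝ (Fin n), ((⟪q, x⟫ - g x : ℝ) : EReal)) ≠ ⊤ →
      ∀ l : ℝ, 0 ≤ l → l ≤ 1 →
        (⨆ x : EuclideanSpace ℝ (Fin n), ((⟪l • p + (1 - l) • q, x⟫ - g x : ℝ) : EReal))
            + ((1 / (2 * L) * (l * (1 - l)) * ‖p - q‖ ^ 2 : ℝ) : EReal)
          ≤ ((l : ℝ) : EReal) * (⨆ x : EuclideanSpace ℝ (Fin n), ((⟪p, x⟫ - g x : ℝ) : EReal))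
            + (((1 - l : ℝ)) : EReal) * (⨆ x : EuclideanSpace ℝ (Fin n), ((⟪q, x⟫ - g x : ℝ) : EReal)) := by
  intro p q hp hq l hl0 hl1
  have hl1' : (0:ℝ) ≤ 1 - l := by linarith
  have hLne : L ≠ 0 := hL.ne'
  -- not bot
  have hpbot : (⨆ x : EuclideanSpace ℝ (Fin n), ((⟪p, x⟫ - g x : ℝ) : EReal)) ≠ ⊥ :=
    (lt_of_lt_of_le (EReal.bot_lt_coe _) (le_iSup (fun x => ((⟪p, x⟫ - g x : ℝ) : EReal)) 0)).ne'
  have hqbot : (⨆ x : EuclideanSpace ℝ (Fin n), ((⟪q, x⟫ - g x : ℝ) : EReal)) ≠ ⊥ :=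
    (lt_of_lt_of_le (EReal.bot_lt_coe _) (le_iSup (fun x => ((⟪q, x⟫ - g x : ℝ) : EReal)) 0)).ne'
  set A : ℝ := (⨆ x : EuclideanSpace ℝ (Fin n), ((⟪p, x⟫ - g x : ℝ) : EReal)).toReal with hAdef
  set B : ℝ := (⨆ x : EuclideanSpace ℝ (Fin n), ((⟪q, x⟫ - g x : ℝ) : EReal)).toReal with hBdef
  have hA : (⨆ x : EuclideanSpace ℝ (Fin n), ((⟪p, x⟫ - g x : ℝ) : EReal)) = (A : EReal) :=
    (EReal.coe_toReal hp hpbot).symm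
  have hB : (⨆ x : EuclideanSpace ℝ (Fin n), ((⟪q, x⟫ - g x : ℝ) : EReal)) = (B : EReal) :=
    (EReal.coe_toReal hq hqbot).symm
  have hAle : ∀ x, ⟪p, x⟫ - g x ≤ A := by
    intro x
    have h := le_iSup (fun x => ((⟪p, x⟫ - g x : ℝ) : EReal)) x
    rw [hA] at h
    exact_mod_cast h
  have hBle : ∀ x, ⟪q, x⟫ - g x ≤ B := by
    intro x
    have h := le_iSup (fun x => ((⟪q, x⟫ - g x : ℝ) : EReal)) x
    rw [hB] at h
    exact_mod_cast h
  set c : ℝ := 1 / (2 * L) * (l * (1 - l)) * ‖p - q‖ ^ 2 with hcdef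
  -- key real inequality
  have key : ∀ x : EuclideanSpace ℝ (Fin n),
      ⟪l • p + (1 - l) • q, x⟫ - g x + c ≤ l * A + (1 - l) * B := by
    intro x
    set d := p - q with hd
    have hu := descent_aux g G L hL hgrad hlip x (((1 - l) / L) • d)
    have hv := descent_aux g G L hL hgrad hlip x ((-(l / L)) • d)
    have t1 : ⟪p, x⟫ + (1 - l) / L * ⟪p, d⟫ - (g x + (1 - l) / L * ⟪G x, d⟫
        + L / 2 * (((1 - l) / L) ^ 2 * ‖d‖ ^ 2)) ≤ A := by
      have h := hAle (x + ((1 - l) / L) • d)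
      rw [inner_add_right, real_inner_smul_right] at h
      rw [real_inner_smul_right, norm_smul, mul_pow] at hu
      simp only [Real.norm_eq_abs, sq_abs] at hu
      linarith
    have t2 : ⟪q, x⟫ + (-(l / L)) * ⟪q, d⟫ - (g x + (-(l / L)) * ⟪G x, d⟫
        + L / 2 * ((l / L) ^ 2 * ‖d‖ ^ 2)) ≤ B := by
      have h := hBle (x + (-(l / L)) • d)
      rw [inner_add_right, real_inner_smul_right] at h
      rw [real_inner_smul_right, norm_smul, mul_pow] at hv
      simp only [Real.norm_eq_abs, sq_abs, neg_pow, abs_neg] at hv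
      linarith
    have t3 := mul_le_mul_of_nonneg_left t1 hl0
    have t4 := mul_le_mul_of_nonneg_left t2 hl1'
    have e7 : ⟪p, d⟫ - ⟪q, d⟫ = ‖d‖ ^ 2 := by
      rw [← inner_sub_left, hd, real_inner_self_eq_norm_sq]
    have e8 : ⟪l • p + (1 - l) • q, x⟫ = l * ⟪p, x⟫ + (1 - l) * ⟪q, x⟫ := by
      rw [inner_add_left, real_inner_smul_left, real_inner_smul_left]
    have heq : ∀ ip iq ig px qx gx N : ℝ, ip - iq = N →
        l * (px + (1 - l) / L * ip - (gx + (1 - l) / L * ig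
          + L / 2 * (((1 - l) / L) ^ 2 * N)))
        + (1 - l) * (qx + (-(l / L)) * iq - (gx + (-(l / L)) * ig
          + L / 2 * ((l / L) ^ 2 * N)))
        = (l * px + (1 - l) * qx) - gx + 1 / (2 * L) * (l * (1 - l)) * N := by
      intro ip iq ig px qx gx N hN
      subst hN
      field_simp
      ring
    have heqs := heq ⟪p, d⟫ ⟪q, d⟫ ⟪G x, d⟫ ⟪p, x⟫ ⟪q, x⟫ (g x) (‖d‖ ^ 2) e7
    rw [e8, hcdef]
    linarith
  -- EReal part
  rw [hA, hB]
  have hco : ((l : ℝ) : EReal) * ((A : ℝ) : EReal) + (((1 - l : ℝ)) : EReal) * ((B : ℝ) : EReal)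
      = ((l * A + (1 - l) * B : ℝ) : EReal) := by
    rw [← EReal.coe_mul, ← EReal.coe_mul, ← EReal.coe_add]
  rw [hco]
  have hsup : (⨆ x : EuclideanSpace ℝ (Fin n), ((⟪l • p + (1 - l) • q, x⟫ - g x : ℝ) : EReal))
      ≤ ((l * A + (1 - l) * B - c : ℝ) : EReal) := by
    apply iSup_le
    intro x
    exact_mod_cast (by linarith [key x] : ⟪l • p + (1 - l) • q, x⟫ - g x ≤ l * A + (1 - l) * B - c)
  calc (⨆ x : EuclideanSpace ℝ (Fin n), ((⟪l • p + (1 - l) • q, x⟫ - g x : ℝ) : EReal)) + (c : EReal)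
      ≤ ((l * A + (1 - l) * B - c : ℝ) : EReal) + (c : EReal) :=
        add_le_add_left hsup _
    _ = ((l * A + (1 - l) * B : ℝ) : EReal) := by
        rw [← EReal.coe_add]; norm_num


/-- The Fenchel conjugate of a real-valued function on `ℝⁿ`, with values in `EReal`. -/
noncomputable def fenchelConj' {n : ℕ} (g : EuclideanSpace ℝ (Fin n) → ℝ)
    (p : EuclideanSpace ℝ (Fin n)) : EReal :=
  ⨆ x : EuclideanSpace ℝ (Fin n), ((⟪p, x⟫ - g x : ℝ) : EReal)

/-- If `g : ℝⁿ → ℝ` is convex, differentiable with `L`-Lipschitz gradient `G`, then its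
conjugate `g*` is `(1/L)`-strongly convex on its domain `{p | g*(p) ≠ ⊤}`. -/
theorem stmt_7 {n : ℕ} (g : EuclideanSpace ℝ (Fin n) → ℝ)
    (G : EuclideanSpace ℝ (Fin n) → EuclideanSpace ℝ (Fin n)) (L : ℝ) (hL : 0 < L)
    (hconv : ConvexOn ℝ Set.univ g)
    (hgrad : ∀ x, HasGradientAt g (G x) x)
    (hlip : ∀ x y, ‖G x - G y‖ ≤ L * ‖x - y‖) :
    ∀ p q : EuclideanSpace ℝ (Fin n), fenchelConj' g p ≠ ⊤ → fenchelConj' g q ≠ ⊤ →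
      ∀ l : ℝ, 0 ≤ l → l ≤ 1 →
        fenchelConj' g (l • p + (1 - l) • q)
            + ((1 / (2 * L) * (l * (1 - l)) * ‖p - q‖ ^ 2 : ℝ) : EReal)
          ≤ ((l : ℝ) : EReal) * fenchelConj' g p
            + (((1 - l : ℝ)) : EReal) * fenchelConj' g q := by
  exact stmt_7' g G L hL hconv hgrad hlip
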